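/- The zero control is the unique equilibrium: any Borel measurable α* : [0,1] → [-1,1] satisfying the equilibrium condition for the cost J(t,α) = ∫_t^1 c(s)·α(s)·(∫_s^1 α(r) dr) ds must satisfy ∫_t^1 α*(r) dr = 0 for all t ∈ [0,1], hence α* = 0 a.e. -/

import Mathlib

open MeasureTheory Set Filter

noncomputable def tn (n : ℕ) : ℝ := 1 - 1 / 2 ^ n
noncomputable def sn (n : ℕ) : ℝ := (tn n + 3 * tn (n + 1)) / 4
noncomputable def c (x : ℝ) : ℝ :=
  ∑' n : ℕ, ((Ico (tn n) (sn n)).indicator (fun _ => (1 : ℝ)) x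
    + 6 * (Ico (sn n) (tn (n + 1))).indicator (fun _ => (1 : ℝ)) x)
noncomputable def J (t : ℝ) (α : ℝ → ℝ) : ℝ :=
  ∫ s in t..1, c s * α s * ∫ r in s..1, α r

def IsEquilibrium (αs : ℝ → ℝ) : Prop :=
  ∀ t ∈ Ico (0 : ℝ) 1, ∀ α : ℝ → ℝ, Measurable α → (∀ x, α x ∈ Icc (-1 : ℝ) 1) →
    0 ≤ liminf
      (fun δ : ℝ => (J t (fun x => if x < t + δ then α x else αs x) - J t αs) / δ)
      (nhdsWithin 0 (Ioi 0))

open Topology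

lemma tn_strictMono : StrictMono tn := by
  intro m n h
  simp only [tn]
  have : (2:ℝ) ^ m < 2 ^ n := by
    apply pow_lt_pow_right₀ (by norm_num) h
  have h2 : (0:ℝ) < 2 ^ m := by positivity
  rw [sub_lt_sub_iff_left, div_lt_div_iff₀ (by positivity) h2]
  linarith

lemma tn_lt_sn (n : ℕ) : tn n < sn n := by
  have := tn_strictMono (Nat.lt_succ_self n)
  simp only [sn]; linarith

lemma sn_lt_tn (n : ℕ) : sn n < tn (n + 1) := by
  have := tn_strictMono (Nat.lt_succ_self n)
  simp only [sn]; linarith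

lemma Ico1_subset (n : ℕ) : Ico (tn n) (sn n) ⊆ Ico (tn n) (tn (n + 1)) :=
  Ico_subset_Ico le_rfl (sn_lt_tn n).le

lemma Ico2_subset (n : ℕ) : Ico (sn n) (tn (n + 1)) ⊆ Ico (tn n) (tn (n + 1)) :=
  Ico_subset_Ico (tn_lt_sn n).le le_rfl

lemma Ico_tn_disj {m n : ℕ} (h : m ≠ n) :
    Disjoint (Ico (tn m) (tn (m + 1))) (Ico (tn n) (tn (n + 1))) := by
  rw [Set.Ico_disjoint_Ico]
  rcases h.lt_or_gt with h' | h'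
  · exact (min_le_left _ _).trans ((tn_strictMono.le_iff_le.2 h').trans (le_max_right _ _))
  · exact (min_le_right _ _).trans ((tn_strictMono.le_iff_le.2 h').trans (le_max_left _ _))

def U1 : Set ℝ := ⋃ n, Ico (tn n) (sn n)
def U2 : Set ℝ := ⋃ n, Ico (sn n) (tn (n + 1))

lemma c_term_eq_zero {x : ℝ} {m N : ℕ} (hm : m ≠ N) (hx : x ∈ Ico (tn N) (tn (N + 1))) :
    (Ico (tn m) (sn m)).indicator (fun _ => (1 : ℝ)) x
      + 6 * (Ico (sn m) (tn (m + 1))).indicator (fun _ => (1 : ℝ)) x = 0 := by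
  have h1 : x ∉ Ico (tn m) (sn m) := fun h =>
    (Ico_tn_disj hm).ne_of_mem (Ico1_subset m h) hx rfl
  have h2 : x ∉ Ico (sn m) (tn (m + 1)) := fun h =>
    (Ico_tn_disj hm).ne_of_mem (Ico2_subset m h) hx rfl
  rw [Set.indicator_of_notMem h1, Set.indicator_of_notMem h2]; ring

lemma c_eq (x : ℝ) : c x = U1.indicator (fun _ => (1:ℝ)) x + 6 * U2.indicator (fun _ => (1:ℝ)) x := by
  by_cases h1 : x ∈ U1
  · obtain ⟨N, hN⟩ : ∃ n, x ∈ Ico (tn n) (sn n) := mem_iUnion.1 h1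
    have hxN : x ∈ Ico (tn N) (tn (N + 1)) := Ico1_subset N hN
    have h2 : x ∉ U2 := by
      intro h2
      obtain ⟨m, hm⟩ := mem_iUnion.1 h2
      rcases eq_or_ne m N with rfl | hne
      · exact absurd hN.2 (not_lt.2 hm.1)
      · exact (Ico_tn_disj hne).ne_of_mem (Ico2_subset m hm) hxN rfl
    rw [Set.indicator_of_mem h1, Set.indicator_of_notMem h2]
    rw [c, tsum_eq_single N (fun m hm => c_term_eq_zero hm hxN)]
    rw [Set.indicator_of_mem hN, Set.indicator_of_notMem (fun h => absurd hN.2 (not_lt.2 h.1))]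
  · by_cases h2 : x ∈ U2
    · obtain ⟨N, hN⟩ : ∃ n, x ∈ Ico (sn n) (tn (n + 1)) := mem_iUnion.1 h2
      have hxN : x ∈ Ico (tn N) (tn (N + 1)) := Ico2_subset N hN
      rw [Set.indicator_of_notMem h1, Set.indicator_of_mem h2]
      rw [c, tsum_eq_single N (fun m hm => c_term_eq_zero hm hxN)]
      rw [Set.indicator_of_mem hN,
        Set.indicator_of_notMem (fun h : x ∈ Ico (tn N) (sn N) => absurd hN.1 (not_le.2 h.2))]
    · rw [Set.indicator_of_notMem h1, Set.indicator_of_notMem h2]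
      have hc : c x = 0 := by
        rw [c]
        convert tsum_zero with n
        rw [Set.indicator_of_notMem (fun h => h1 (mem_iUnion.2 ⟨n, h⟩)),
          Set.indicator_of_notMem (fun h => h2 (mem_iUnion.2 ⟨n, h⟩))]
        ring
      rw [hc]; ring

lemma c_meas : Measurable c := by
  have hU1 : MeasurableSet U1 := MeasurableSet.iUnion fun n => measurableSet_Ico
  have hU2 : MeasurableSet U2 := MeasurableSet.iUnion fun n => measurableSet_Ico
  have : c = fun x => U1.indicator (fun _ => (1:ℝ)) x + 6 * U2.indicator (fun _ => (1:ℝ)) x :=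
    funext c_eq
  rw [this]
  exact ((measurable_const.indicator hU1).add
    (measurable_const.mul (measurable_const.indicator hU2)))

lemma c_nonneg (x : ℝ) : 0 ≤ c x := by
  rw [c_eq]
  have := Set.indicator_apply_nonneg (s := U1) (f := fun _ => (1:ℝ)) (a := x) (fun _ => zero_le_one)
  have := Set.indicator_apply_nonneg (s := U2) (f := fun _ => (1:ℝ)) (a := x) (fun _ => zero_le_one)
  linarith

lemma c_le_seven (x : ℝ) : c x ≤ 7 := by
  rw [c_eq]
  have h1 := Set.indicator_apply_le' (s := U1) (f := fun _ => (1:ℝ)) (a := x)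
    (fun _ => le_refl 1) (fun _ => zero_le_one)
  have h2 := Set.indicator_apply_le' (s := U2) (f := fun _ => (1:ℝ)) (a := x)
    (fun _ => le_refl 1) (fun _ => zero_le_one)
  linarith

lemma one_le_c {x : ℝ} (hx : x ∈ Ico (0:ℝ) 1) : 1 ≤ c x := by
  obtain ⟨hx0, hx1⟩ := hx
  have hex : ∃ n, x < tn n := by
    obtain ⟨n, hn⟩ := exists_pow_lt_of_lt_one (by linarith : (0:ℝ) < 1 - x) (by norm_num : (1:ℝ)/2 < 1)
    exact ⟨n, by simp only [tn, div_pow, one_pow] at hn ⊢; linarith⟩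
  classical
  have hn0 : x < tn (Nat.find hex) := Nat.find_spec hex
  have hn0ne : Nat.find hex ≠ 0 := by
    intro h
    rw [h] at hn0
    simp [tn] at hn0
    linarith
  obtain ⟨N, hN⟩ : ∃ N, Nat.find hex = N + 1 :=
    ⟨Nat.find hex - 1, (Nat.succ_pred_eq_of_pos (Nat.pos_of_ne_zero hn0ne)).symm⟩
  rw [hN] at hn0
  have hNx : tn N ≤ x := not_lt.1 (Nat.find_min hex (by omega))
  rw [c_eq]
  have h1 := Set.indicator_apply_nonneg (s := U1) (f := fun _ => (1:ℝ)) (a := x) (fun _ => zero_le_one)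
  have h2 := Set.indicator_apply_nonneg (s := U2) (f := fun _ => (1:ℝ)) (a := x) (fun _ => zero_le_one)
  rcases lt_or_ge x (sn N) with h | h
  · have hmem : x ∈ U1 := mem_iUnion.2 ⟨N, ⟨hNx, h⟩⟩
    rw [Set.indicator_of_mem hmem]
    linarith
  · have hmem : x ∈ U2 := mem_iUnion.2 ⟨N, ⟨h, hn0⟩⟩
    rw [Set.indicator_of_mem hmem]
    linarith

-- chunk 2: integration helpers

lemma II' {f : ℝ → ℝ} (hf : Measurable f) {C a b : ℝ} (h : ∀ x ∈ Set.uIoc a b, |f x| ≤ C) :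
    IntervalIntegrable f volume a b := by
  constructor
  · apply (integrable_const C).mono' (hf.aestronglyMeasurable.restrict)
    rw [ae_restrict_iff' measurableSet_Ioc]
    exact ae_of_all _ fun x hx => by
      simpa [Real.norm_eq_abs] using h x (Set.Ioc_subset_uIoc hx)
  · apply (integrable_const C).mono' (hf.aestronglyMeasurable.restrict)
    rw [ae_restrict_iff' measurableSet_Ioc]
    exact ae_of_all _ fun x hx => by
      simpa [Real.norm_eq_abs] using h x (Set.Ioc_subset_uIoc' hx)

lemma primitive_sub {f : ℝ → ℝ} (hf : Measurable f) (h : ∀ x, |f x| ≤ 1) (a b : ℝ) :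
    (∫ r in a..1, f r) - (∫ r in b..1, f r) = ∫ r in a..b, f r := by
  have hii : ∀ a b : ℝ, IntervalIntegrable f volume a b := fun a b => II' hf fun x _ => h x
  have hadd := intervalIntegral.integral_add_adjacent_intervals (hii a b) (hii b 1)
  linarith

lemma primitive_lip {f : ℝ → ℝ} (hf : Measurable f) (h : ∀ x, |f x| ≤ 1) :
    LipschitzWith 1 (fun t => ∫ r in t..1, f r) := by
  refine LipschitzWith.of_dist_le_mul fun a b => ?_
  rw [Real.dist_eq, Real.dist_eq, NNReal.coe_one, one_mul]
  have : (∫ r in a..1, f r) - (∫ r in b..1, f r) = ∫ r in a..b, f r :=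
    primitive_sub hf h a b
  rw [this]
  calc |∫ r in a..b, f r| ≤ 1 * |b - a| := by
        rw [← Real.norm_eq_abs]
        apply intervalIntegral.norm_integral_le_of_norm_le_const
        intro x _; rw [Real.norm_eq_abs]; exact h x
    _ = |a - b| := by rw [one_mul, abs_sub_comm]

lemma primitive_bdd {f : ℝ → ℝ} (h : ∀ x, |f x| ≤ 1) {s : ℝ} (hs : s ∈ Icc (0:ℝ) 1) :
    |∫ r in s..1, f r| ≤ 1 := by
  calc |∫ r in s..1, f r| ≤ 1 * |1 - s| := by
        rw [← Real.norm_eq_abs]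
        apply intervalIntegral.norm_integral_le_of_norm_le_const
        intro x _; rw [Real.norm_eq_abs]; exact h x
    _ ≤ 1 := by rw [one_mul, abs_of_nonneg (by linarith [hs.2])]; linarith [hs.1]

lemma ig_II {g : ℝ → ℝ} (hg : Measurable g) (h : ∀ x, |g x| ≤ 1) {a b : ℝ}
    (hab : Set.uIoc a b ⊆ Icc (0:ℝ) 1) :
    IntervalIntegrable (fun s => c s * g s * ∫ r in s..1, g r) volume a b := by
  apply II' ((c_meas.mul hg).mul (primitive_lip hg h).continuous.measurable) (C := 7)
  intro x hx
  have hx' := hab hx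
  have h1 : |c x| ≤ 7 := abs_le.2 ⟨by linarith [c_nonneg x], c_le_seven x⟩
  have h2 := h x
  have h3 := primitive_bdd h hx'
  calc |c x * g x * ∫ r in x..1, g r| = |c x| * |g x| * |∫ r in x..1, g r| := by
        rw [abs_mul, abs_mul]
    _ ≤ 7 * 1 * 1 := by
        apply mul_le_mul (mul_le_mul h1 h2 (abs_nonneg _) (by norm_num)) h3 (abs_nonneg _)
        norm_num
    _ = 7 := by norm_num

lemma arith {C A B D a F0 δ : ℝ} (hC0 : 0 ≤ C) (hC7 : C ≤ 7) (hA : |A| ≤ δ)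
    (hB0 : 0 ≤ B) (hBδ : B ≤ δ) (hD : |D| ≤ δ) (ha : -1 ≤ a) (ha' : a ≤ 1) :
    C * (-1) * (F0 + A - B) - C * a * (F0 + D) ≤ -F0 * (C * (1 + a)) + 21 * δ := by
  obtain ⟨hA1, hA2⟩ := abs_le.1 hA
  obtain ⟨hD1, hD2⟩ := abs_le.1 hD
  have hδ0 : 0 ≤ δ := le_trans hB0 hBδ
  have haD : -δ ≤ a * D := by
    nlinarith [mul_nonneg (by linarith : (0:ℝ) ≤ 1 + a) (by linarith : 0 ≤ δ + D),
      mul_nonneg (by linarith : (0:ℝ) ≤ 1 - a) (by linarith : 0 ≤ δ - D)]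
  have h1 : C * (-A) ≤ 7 * δ := by nlinarith
  have h2 : C * B ≤ 7 * δ := by nlinarith
  have h3 : C * (-(a * D)) ≤ 7 * δ := by nlinarith
  nlinarith [h1, h2, h3]

-- chunk 3: the main identity and bound

lemma deltaJ_eq (αs : ℝ → ℝ) (hαs : Measurable αs) (hb : ∀ x, αs x ∈ Icc (-1:ℝ) 1)
    {t δ : ℝ} (ht0 : 0 ≤ t) (hδ : 0 < δ) (hδ1 : t + δ ≤ 1) :
    J t (fun x => if x < t + δ then (-1:ℝ) else αs x) - J t αs
      = ∫ s in t..t+δ,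
          (c s * (if s < t + δ then (-1:ℝ) else αs s)
              * (∫ r in s..1, if r < t + δ then (-1:ℝ) else αs r)
            - c s * αs s * ∫ r in s..1, αs r) := by
  have habs : ∀ x, |αs x| ≤ 1 := fun x => abs_le.2 ⟨(hb x).1, (hb x).2⟩
  set β := fun x => if x < t + δ then (-1:ℝ) else αs x with hβdef
  have hβm : Measurable β := Measurable.ite measurableSet_Iio measurable_const hαs
  have hβa : ∀ x, |β x| ≤ 1 := by
    intro x; rw [hβdef]; dsimp only
    split
    · norm_num
    · exact habs x
  have hsub1 : Set.uIoc t (t+δ) ⊆ Icc (0:ℝ) 1 := by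
    rw [Set.uIoc_of_le (by linarith)]
    intro x hx; exact ⟨by linarith [hx.1], by linarith [hx.2]⟩
  have hsub2 : Set.uIoc (t+δ) 1 ⊆ Icc (0:ℝ) 1 := by
    rw [Set.uIoc_of_le (by linarith)]
    intro x hx; exact ⟨by linarith [hx.1], hx.2⟩
  have i1 := ig_II hβm hβa hsub1
  have i1' := ig_II hβm hβa hsub2
  have i2 := ig_II hαs habs hsub1
  have i2' := ig_II hαs habs hsub2
  have htail : (∫ s in (t+δ)..1, c s * β s * ∫ r in s..1, β r)
      = ∫ s in (t+δ)..1, c s * αs s * ∫ r in s..1, αs r := by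
    apply intervalIntegral.integral_congr
    intro s hs
    rw [Set.uIcc_of_le (by linarith : t+δ ≤ (1:ℝ))] at hs
    have h1 : β s = αs s := if_neg (not_lt.2 hs.1)
    have h2 : (∫ r in s..1, β r) = ∫ r in s..1, αs r := by
      apply intervalIntegral.integral_congr
      intro x hx
      rw [Set.uIcc_of_le hs.2] at hx
      exact if_neg (not_lt.2 (le_trans hs.1 hx.1))
    dsimp only; rw [h1, h2]
  have hJβ : J t β = (∫ s in t..t+δ, c s * β s * ∫ r in s..1, β r)
      + ∫ s in (t+δ)..1, c s * αs s * ∫ r in s..1, αs r := by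
    rw [J, ← htail, intervalIntegral.integral_add_adjacent_intervals i1 i1']
  have hJα : J t αs = (∫ s in t..t+δ, c s * αs s * ∫ r in s..1, αs r)
      + ∫ s in (t+δ)..1, c s * αs s * ∫ r in s..1, αs r := by
    rw [J, intervalIntegral.integral_add_adjacent_intervals i2 i2']
  rw [hJβ, hJα, intervalIntegral.integral_sub i1 i2]
  ring

lemma bound2 (αs : ℝ → ℝ) (hαs : Measurable αs) (hb : ∀ x, αs x ∈ Icc (-1:ℝ) 1)
    {t δ : ℝ} (ht0 : 0 ≤ t) (hδ : 0 < δ) (hδ1 : t + δ ≤ 1) :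
    |J t (fun x => if x < t + δ then (-1:ℝ) else αs x) - J t αs| ≤ 14 * δ := by
  have habs : ∀ x, |αs x| ≤ 1 := fun x => abs_le.2 ⟨(hb x).1, (hb x).2⟩
  have hβa : ∀ x, |(if x < t + δ then (-1:ℝ) else αs x)| ≤ 1 := by
    intro x; split
    · norm_num
    · exact habs x
  rw [deltaJ_eq αs hαs hb ht0 hδ hδ1]
  calc |∫ s in t..t+δ,
          (c s * (if s < t + δ then (-1:ℝ) else αs s)
              * (∫ r in s..1, if r < t + δ then (-1:ℝ) else αs r)
            - c s * αs s * ∫ r in s..1, αs r)| ≤ 14 * |t + δ - t| := by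
        rw [← Real.norm_eq_abs]
        apply intervalIntegral.norm_integral_le_of_norm_le_const
        intro x hx
        rw [Set.uIoc_of_le (by linarith : t ≤ t + δ)] at hx
        have hx' : x ∈ Icc (0:ℝ) 1 := ⟨by linarith [hx.1], by linarith [hx.2]⟩
        have h1 : |c x| ≤ 7 := abs_le.2 ⟨by linarith [c_nonneg x], c_le_seven x⟩
        have h3 := primitive_bdd hβa hx'
        have h4 := primitive_bdd habs hx'
        rw [Real.norm_eq_abs]
        have e1 : |c x * (if x < t + δ then (-1:ℝ) else αs x)
            * (∫ r in x..1, if r < t + δ then (-1:ℝ) else αs r)| ≤ 7 := by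
          rw [abs_mul, abs_mul]
          calc |c x| * |(if x < t + δ then (-1:ℝ) else αs x)|
                * |∫ r in x..1, if r < t + δ then (-1:ℝ) else αs r| ≤ 7 * 1 * 1 := by
                apply mul_le_mul (mul_le_mul h1 (hβa x) (abs_nonneg _) (by norm_num)) h3
                  (abs_nonneg _) (by norm_num)
            _ = 7 := by norm_num
        have e2 : |c x * αs x * ∫ r in x..1, αs r| ≤ 7 := by
          rw [abs_mul, abs_mul]
          calc |c x| * |αs x| * |∫ r in x..1, αs r| ≤ 7 * 1 * 1 := by
                apply mul_le_mul (mul_le_mul h1 (habs x) (abs_nonneg _) (by norm_num)) h4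
                  (abs_nonneg _) (by norm_num)
            _ = 7 := by norm_num
        calc |c x * (if x < t + δ then (-1:ℝ) else αs x)
            * (∫ r in x..1, if r < t + δ then (-1:ℝ) else αs r)
            - c x * αs x * ∫ r in x..1, αs r| ≤ _ + _ := abs_sub _ _
          _ ≤ 14 := by linarith
    _ = 14 * δ := by rw [show t + δ - t = δ by ring, abs_of_pos hδ]

lemma cα_II (αs : ℝ → ℝ) (hαs : Measurable αs) (hb : ∀ x, αs x ∈ Icc (-1:ℝ) 1)
    (a b : ℝ) : IntervalIntegrable (fun s => c s * (1 + αs s)) volume a b := by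
  apply II' (c_meas.mul (measurable_const.add hαs)) (C := 14)
  intro x _
  have h1 : |c x| ≤ 7 := abs_le.2 ⟨by linarith [c_nonneg x], c_le_seven x⟩
  have h2 : |1 + αs x| ≤ 2 := abs_le.2 ⟨by linarith [(hb x).1], by linarith [(hb x).2]⟩
  calc |c x * (1 + αs x)| = |c x| * |1 + αs x| := abs_mul _ _
    _ ≤ 7 * 2 := mul_le_mul h1 h2 (abs_nonneg _) (by norm_num)
    _ = 14 := by norm_num

lemma bound1 (αs : ℝ → ℝ) (hαs : Measurable αs) (hb : ∀ x, αs x ∈ Icc (-1:ℝ) 1)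
    {t δ : ℝ} (ht0 : 0 ≤ t) (hδ : 0 < δ) (hδ1 : t + δ ≤ 1) :
    J t (fun x => if x < t + δ then (-1:ℝ) else αs x) - J t αs
      ≤ -(∫ r in t..1, αs r) * (∫ s in t..t+δ, c s * (1 + αs s)) + 21 * δ * δ := by
  have habs : ∀ x, |αs x| ≤ 1 := fun x => abs_le.2 ⟨(hb x).1, (hb x).2⟩
  have hβm : Measurable (fun x => if x < t + δ then (-1:ℝ) else αs x) :=
    Measurable.ite measurableSet_Iio measurable_const hαs
  have hβa : ∀ x, |(if x < t + δ then (-1:ℝ) else αs x)| ≤ 1 := by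
    intro x; split
    · norm_num
    · exact habs x
  have hsub1 : Set.uIoc t (t+δ) ⊆ Icc (0:ℝ) 1 := by
    rw [Set.uIoc_of_le (by linarith)]
    intro x hx; exact ⟨by linarith [hx.1], by linarith [hx.2]⟩
  rw [deltaJ_eq αs hαs hb ht0 hδ hδ1]
  have hIint := cα_II αs hαs hb t (t+δ)
  have hRHS : (∫ s in t..t+δ, (-(∫ r in t..1, αs r) * (c s * (1 + αs s)) + 21 * δ))
      = -(∫ r in t..1, αs r) * (∫ s in t..t+δ, c s * (1 + αs s)) + 21 * δ * δ := by
    rw [intervalIntegral.integral_add (hIint.const_mul _) intervalIntegrable_const,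
      intervalIntegral.integral_const_mul, intervalIntegral.integral_const]
    rw [show t + δ - t = δ by ring, smul_eq_mul]
    ring
  rw [← hRHS]
  have hle : t ≤ t + δ := by linarith
  have hig : IntervalIntegrable (fun s =>
      c s * (if s < t + δ then (-1:ℝ) else αs s)
          * (∫ r in s..1, if r < t + δ then (-1:ℝ) else αs r)
        - c s * αs s * ∫ r in s..1, αs r) volume t (t+δ) :=
    (ig_II hβm hβa hsub1).sub (ig_II hαs habs hsub1)
  have hig2 : IntervalIntegrable (fun s =>
      -(∫ r in t..1, αs r) * (c s * (1 + αs s)) + 21 * δ) volume t (t+δ) :=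
    (hIint.const_mul _).add intervalIntegrable_const
  rw [intervalIntegral.integral_of_le hle, intervalIntegral.integral_of_le hle,
    MeasureTheory.integral_Ioc_eq_integral_Ioo, MeasureTheory.integral_Ioc_eq_integral_Ioo]
  apply MeasureTheory.setIntegral_mono_on
  · exact (hig.1.mono_set Set.Ioo_subset_Ioc_self)
  · exact (hig2.1.mono_set Set.Ioo_subset_Ioc_self)
  · exact measurableSet_Ioo
  · intro s hs
    obtain ⟨hs1, hs2⟩ := hs
    -- pointwise bound
    have hβs : (if s < t + δ then (-1:ℝ) else αs s) = -1 := if_pos hs2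
    -- compute inner integral
    have hsplit : (∫ r in s..(t+δ), if r < t + δ then (-1:ℝ) else αs r)
          + (∫ r in (t+δ)..1, if r < t + δ then (-1:ℝ) else αs r)
        = ∫ r in s..1, if r < t + δ then (-1:ℝ) else αs r :=
      intervalIntegral.integral_add_adjacent_intervals
        (II' hβm fun x _ => hβa x) (II' hβm fun x _ => hβa x)
    have hconst : (∫ r in s..(t+δ), if r < t + δ then (-1:ℝ) else αs r)
        = -(t + δ - s) := by
      have hae : ∀ᵐ x : ℝ, x ∈ Set.uIoc s (t+δ) → (if x < t + δ then (-1:ℝ) else αs x) = -1 := by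
        have h0 : (volume : Measure ℝ) {t+δ} = 0 := measure_singleton _
        filter_upwards [measure_eq_zero_iff_ae_notMem.1 h0] with x hx hmem
        rw [Set.uIoc_of_le (le_of_lt hs2)] at hmem
        have : x < t + δ := lt_of_le_of_ne hmem.2 (by simpa using hx)
        exact if_pos this
      rw [intervalIntegral.integral_congr_ae hae, intervalIntegral.integral_const, smul_eq_mul]
      ring
    have htail2 : (∫ r in (t+δ)..1, if r < t + δ then (-1:ℝ) else αs r)
        = ∫ r in (t+δ)..1, αs r := by
      apply intervalIntegral.integral_congr
      intro x hx
      rw [Set.uIcc_of_le hδ1] at hx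
      exact if_neg (not_lt.2 hx.1)
    have hP : (∫ r in s..1, if r < t + δ then (-1:ℝ) else αs r)
        = (∫ r in (t+δ)..1, αs r) - (t + δ - s) := by
      rw [← hsplit, hconst, htail2]; ring
    -- Lipschitz facts
    have lip := primitive_lip hαs habs
    have e1 : |(∫ r in (t+δ)..1, αs r) - ∫ r in t..1, αs r| ≤ δ := by
      have := lip.dist_le_mul (t+δ) t
      rw [Real.dist_eq, Real.dist_eq, NNReal.coe_one, one_mul] at this
      calc |(∫ r in (t+δ)..1, αs r) - ∫ r in t..1, αs r| ≤ |t + δ - t| := this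
        _ = δ := by rw [show t + δ - t = δ by ring, abs_of_pos hδ]
    have e2 : |(∫ r in s..1, αs r) - ∫ r in t..1, αs r| ≤ δ := by
      have := lip.dist_le_mul s t
      rw [Real.dist_eq, Real.dist_eq, NNReal.coe_one, one_mul] at this
      calc |(∫ r in s..1, αs r) - ∫ r in t..1, αs r| ≤ |s - t| := this
        _ ≤ δ := by rw [abs_of_pos (by linarith)]; linarith
    have harith := arith (C := c s) (A := (∫ r in (t+δ)..1, αs r) - ∫ r in t..1, αs r)
      (B := t + δ - s) (D := (∫ r in s..1, αs r) - ∫ r in t..1, αs r)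
      (a := αs s) (F0 := ∫ r in t..1, αs r) (δ := δ)
      (c_nonneg s) (c_le_seven s) e1 (by linarith) (by linarith) e2 (hb s).1 (hb s).2
    have eq1 : c s * (if s < t + δ then (-1:ℝ) else αs s)
        * (∫ r in s..1, if r < t + δ then (-1:ℝ) else αs r)
        = c s * (-1) * ((∫ r in t..1, αs r)
            + ((∫ r in (t+δ)..1, αs r) - ∫ r in t..1, αs r) - (t + δ - s)) := by
      rw [hβs, hP]; ring
    have eq2 : c s * αs s * (∫ r in s..1, αs r)
        = c s * αs s * ((∫ r in t..1, αs r)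
            + ((∫ r in s..1, αs r) - ∫ r in t..1, αs r)) := by ring
    rw [eq1]
    linarith [harith]

lemma key (αs : ℝ → ℝ) (hαs : Measurable αs) (hb : ∀ x, αs x ∈ Icc (-1:ℝ) 1)
    (heq : IsEquilibrium αs) {t : ℝ} (ht : t ∈ Ico (0:ℝ) 1)
    (hF : 0 < ∫ r in t..1, αs r) :
    ∃ δ : ℝ, 0 < δ ∧ t + δ ≤ 1 ∧ (∫ r in t..1, αs r) < ∫ r in (t+δ)..1, αs r := by
  obtain ⟨ht0, ht1⟩ := ht
  have habs : ∀ x, |αs x| ≤ 1 := fun x => abs_le.2 ⟨(hb x).1, (hb x).2⟩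
  set Ft := ∫ r in t..1, αs r with hFt
  set q := fun δ : ℝ => (J t (fun x => if x < t + δ then (-1:ℝ) else αs x) - J t αs) / δ
    with hq
  have hlim : 0 ≤ liminf q (𝓝[>] (0:ℝ)) := by
    have := heq t ⟨ht0, ht1⟩ (fun _ => (-1:ℝ)) measurable_const
      (fun x => ⟨le_refl _, by norm_num⟩)
    exact this
  -- boundedness below of q near 0
  have hIoo : Ioo (0:ℝ) (1 - t) ∈ 𝓝[>] (0:ℝ) :=
    Ioo_mem_nhdsGT_of_mem ⟨le_refl 0, by linarith⟩
  have hbdd : IsBoundedUnder (· ≥ ·) (𝓝[>] (0:ℝ)) q := by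
    apply isBoundedUnder_of_eventually_ge (a := (-14 : ℝ))
    filter_upwards [hIoo] with δ hδ
    have h2 := bound2 αs hαs hb ht0 hδ.1 (by linarith [hδ.2])
    have h3 := (abs_le.1 h2).1
    rw [hq]
    exact (le_div_iff₀ hδ.1).2 (by linarith)
  have hev1 : ∀ᶠ δ in 𝓝[>] (0:ℝ), -Ft/4 < q δ :=
    eventually_lt_of_lt_liminf (lt_of_lt_of_le (by linarith) hlim) hbdd
  have hev2 : Ioo (0:ℝ) (min (1-t) (Ft/168)) ∈ 𝓝[>] (0:ℝ) :=
    Ioo_mem_nhdsGT_of_mem ⟨le_refl 0, lt_min (by linarith) (by linarith)⟩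
  obtain ⟨δ, hδq, hδm⟩ := (hev1.and hev2).exists
  obtain ⟨hδ0, hδlt⟩ := hδm
  have hδ1t : δ < 1 - t := lt_of_lt_of_le hδlt (min_le_left _ _)
  have h21 : 21 * δ < Ft / 8 := by
    have := lt_of_lt_of_le hδlt (min_le_right _ _)
    linarith
  have hδ1 : t + δ ≤ 1 := by linarith
  set Iδ := ∫ s in t..t+δ, c s * (1 + αs s) with hIδ
  have hΔle : J t (fun x => if x < t + δ then (-1:ℝ) else αs x) - J t αs
      ≤ -Ft * Iδ + 21 * δ * δ := bound1 αs hαs hb ht0 hδ0 hδ1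
  have hΔeq : J t (fun x => if x < t + δ then (-1:ℝ) else αs x) - J t αs = q δ * δ := by
    rw [hq]; field_simp
  have hIlt : Iδ < δ / 2 := by
    by_contra hcon
    push_neg at hcon
    nlinarith [mul_le_mul_of_nonneg_left hcon (le_of_lt hF),
      mul_lt_mul_of_pos_right hδq hδ0, mul_lt_mul_of_pos_right h21 hδ0]
  -- compare with ∫ (1 + αs)
  have hJle : (∫ s in t..t+δ, (1 + αs s)) ≤ Iδ := by
    apply intervalIntegral.integral_mono_on (by linarith)
    · exact II' (measurable_const.add hαs) (C := 2)
        fun x _ => abs_le.2 ⟨by simp only [Pi.add_apply]; linarith [(hb x).1], by simp only [Pi.add_apply]; linarith [(hb x).2]⟩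
    · exact cα_II αs hαs hb t (t+δ)
    · intro s hs
      have hs01 : s ∈ Ico (0:ℝ) 1 := ⟨by linarith [hs.1], by linarith [hs.2]⟩
      nlinarith [one_le_c hs01, (hb s).1]
  have hJeq : (∫ s in t..t+δ, (1 + αs s)) = δ + ∫ s in t..t+δ, αs s := by
    rw [intervalIntegral.integral_add intervalIntegrable_const
      (II' hαs (C := 1) fun x _ => habs x), intervalIntegral.integral_const, smul_eq_mul]
    ring
  have hFdiff : Ft - (∫ r in (t+δ)..1, αs r) = ∫ s in t..t+δ, αs s :=
    primitive_sub hαs habs t (t+δ)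
  exact ⟨δ, hδ0, hδ1, by linarith⟩

lemma F_nonpos (αs : ℝ → ℝ) (hαs : Measurable αs) (hb : ∀ x, αs x ∈ Icc (-1:ℝ) 1)
    (heq : IsEquilibrium αs) : ∀ t ∈ Icc (0:ℝ) 1, (∫ r in t..1, αs r) ≤ 0 := by
  intro t0 ht0
  by_contra hcon
  push_neg at hcon
  have habs : ∀ x, |αs x| ≤ 1 := fun x => abs_le.2 ⟨(hb x).1, (hb x).2⟩
  have ht01 : t0 < 1 := by
    rcases lt_or_eq_of_le ht0.2 with h | h
    · exact h
    · rw [h] at hcon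
      simp [intervalIntegral.integral_same] at hcon
  set K := Icc t0 1 ∩ {u : ℝ | (∫ r in t0..1, αs r) ≤ ∫ r in u..1, αs r} with hK
  have hK0 : t0 ∈ K := ⟨⟨le_refl _, le_of_lt ht01⟩,
    show (∫ r in t0..1, αs r) ≤ ∫ r in t0..1, αs r from le_refl _⟩
  have hKne : K.Nonempty := ⟨t0, hK0⟩
  have hbddK : BddAbove K := BddAbove.mono inter_subset_left bddAbove_Icc
  have hclosed : IsClosed K :=
    isClosed_Icc.inter (isClosed_le continuous_const (primitive_lip hαs habs).continuous)
  have hm := hclosed.csSup_mem hKne hbddK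
  set m := sSup K with hmdef
  obtain ⟨⟨hmt0, hm1'⟩, hmF⟩ := hm
  have hmF' : (∫ r in t0..1, αs r) ≤ ∫ r in m..1, αs r := hmF
  have hFm : 0 < ∫ r in m..1, αs r := lt_of_lt_of_le hcon hmF'
  have hm1 : m < 1 := by
    rcases lt_or_eq_of_le hm1' with h | h
    · exact h
    · rw [h] at hFm
      simp [intervalIntegral.integral_same] at hFm
  obtain ⟨δ, hδ0, hδ1, hδF⟩ := key αs hαs hb heq ⟨le_trans ht0.1 hmt0, hm1⟩ hFm
  have hmem : m + δ ∈ K := ⟨⟨by linarith, hδ1⟩,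
    show (∫ r in t0..1, αs r) ≤ ∫ r in (m+δ)..1, αs r by linarith⟩
  have := le_csSup hbddK hmem
  linarith

lemma J_neg (t : ℝ) (g : ℝ → ℝ) : J t (fun x => -g x) = J t g := by
  simp only [J]
  refine intervalIntegral.integral_congr fun s _ => ?_
  rw [intervalIntegral.integral_neg]
  ring

lemma equil_neg (αs : ℝ → ℝ) (heq : IsEquilibrium αs) : IsEquilibrium (fun x => -αs x) := by
  intro t ht α hα hbα
  have h1 := heq t ht (fun x => -α x) hα.neg
    (fun x => ⟨show (-1:ℝ) ≤ -α x by linarith [(hbα x).2],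
      show -α x ≤ 1 by linarith [(hbα x).1]⟩)
  have hfun : (fun δ : ℝ => (J t (fun x => if x < t + δ then α x else (fun y => -αs y) x)
        - J t (fun y => -αs y)) / δ)
      = fun δ : ℝ => (J t (fun x => if x < t + δ then (fun y => -α y) x else αs x) - J t αs) / δ := by
    funext δ
    have e1 : (fun x => if x < t + δ then α x else (fun y => -αs y) x)
        = fun x => -(if x < t + δ then (fun y => -α y) x else αs x) := by
      funext x
      by_cases h : x < t + δ <;> simp [h]
    rw [e1, J_neg t (fun x => if x < t + δ then (fun y => -α y) x else αs x), J_neg t αs]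
  rw [hfun]
  exact h1

theorem stmt5 (αs : ℝ → ℝ) (hαs : Measurable αs) (hb : ∀ x, αs x ∈ Icc (-1 : ℝ) 1)
    (heq : IsEquilibrium αs) :
    (∀ t ∈ Icc (0 : ℝ) 1, (∫ r in t..1, αs r) = 0) ∧
      ∀ᵐ x ∂(volume.restrict (Icc (0 : ℝ) 1)), αs x = 0 := by
  have habs : ∀ x, |αs x| ≤ 1 := fun x => abs_le.2 ⟨(hb x).1, (hb x).2⟩
  have hpart1 : ∀ t ∈ Icc (0:ℝ) 1, (∫ r in t..1, αs r) = 0 := by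
    intro t ht
    have h1 := F_nonpos αs hαs hb heq t ht
    have h2 := F_nonpos (fun x => -αs x) hαs.neg
      (fun x => ⟨show (-1:ℝ) ≤ -αs x by linarith [(hb x).2],
        show -αs x ≤ 1 by linarith [(hb x).1]⟩)
      (equil_neg αs heq) t ht
    rw [intervalIntegral.integral_neg] at h2
    linarith
  refine ⟨hpart1, ?_⟩
  have hloc : LocallyIntegrable αs volume := by
    intro x
    refine ⟨Metric.ball x 1, Metric.ball_mem_nhds x one_pos, ?_⟩
    apply Integrable.mono' (g := fun _ => (1:ℝ))
      ((integrableOn_const_iff).2 (Or.inr measure_ball_lt_top))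
      (hαs.aestronglyMeasurable.restrict)
    exact ae_of_all _ fun y => by rw [Real.norm_eq_abs]; exact habs y
  have hdiff := IsUnifLocDoublingMeasure.ae_tendsto_average (μ := (volume : Measure ℝ)) hloc 1
  rw [ae_restrict_iff' measurableSet_Icc]
  have h01 : ∀ᵐ x : ℝ ∂volume, x ∉ ({0, 1} : Set ℝ) := by
    rw [← measure_eq_zero_iff_ae_notMem]
    exact ((Set.finite_singleton (1:ℝ)).insert 0).measure_zero volume
  filter_upwards [hdiff, h01] with x hx hx01 hxIcc
  have hx0 : x ≠ 0 := fun h => hx01 (by rw [h]; exact Set.mem_insert _ _)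
  have hx1 : x ≠ 1 := fun h => hx01 (by rw [h]; exact Set.mem_insert_of_mem _ rfl)
  have hxIoo : x ∈ Ioo (0:ℝ) 1 :=
    ⟨lt_of_le_of_ne hxIcc.1 (Ne.symm hx0), lt_of_le_of_ne hxIcc.2 hx1⟩
  have hmem : ∀ᶠ r in 𝓝[>] (0:ℝ), x ∈ Metric.closedBall x (1 * r) := by
    filter_upwards [self_mem_nhdsWithin] with r hr
    rw [Metric.mem_closedBall, dist_self, one_mul]
    exact le_of_lt hr
  have htend : Tendsto (fun r => ⨍ y in Metric.closedBall x r, αs y) (𝓝[>] (0:ℝ))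
      (𝓝 (αs x)) := hx (fun _ => x) (fun r => r) tendsto_id hmem
  have hzero : ∀ᶠ r in 𝓝[>] (0:ℝ), (⨍ y in Metric.closedBall x r, αs y) = 0 := by
    have hminpos : 0 < min x (1 - x) := lt_min hxIoo.1 (by linarith [hxIoo.2])
    filter_upwards [Ioo_mem_nhdsGT_of_mem ⟨le_refl (0:ℝ), hminpos⟩] with r hr
    have hr1 : r ≤ x := le_of_lt (lt_of_lt_of_le hr.2 (min_le_left _ _))
    have hr2 : r ≤ 1 - x := le_of_lt (lt_of_lt_of_le hr.2 (min_le_right _ _))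
    have hintegral : (∫ y in Metric.closedBall x r, αs y) = 0 := by
      rw [Real.closedBall_eq_Icc, MeasureTheory.integral_Icc_eq_integral_Ioc,
        ← intervalIntegral.integral_of_le (by linarith [hr.1] : x - r ≤ x + r)]
      have hps := primitive_sub hαs habs (x - r) (x + r)
      rw [hpart1 (x - r) ⟨by linarith, by linarith [hxIoo.2, hr.1]⟩,
        hpart1 (x + r) ⟨by linarith [hxIoo.1, hr.1], by linarith⟩] at hps
      linarith
    rw [setAverage_eq, hintegral, smul_zero]
  have hlim0 : Tendsto (fun r : ℝ => (0:ℝ)) (𝓝[>] (0:ℝ)) (𝓝 (αs x)) :=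
    htend.congr' (hzero.mono fun r hr => hr)
  exact (tendsto_nhds_unique hlim0 tendsto_const_nhds).symm ▸ rfl
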